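/- Let μ be a Borel probability measure on C[0,1]. Then there exists a function g ∈ C[0,1] such that μ({ f ∈ C[0,1] : Z(f − g) is a singleton }) > 0. Consequently, the set { f ∈ C[0,1] : Z(f) is a singleton } is non-shy in C[0,1]. -/

import Mathlib

open Set Metric MeasureTheory Filter Topology
open scoped ENNReal NNReal Classical

noncomputable section

/-- A set in an abelian topological group is *shy* (Haar null) if it is contained in a Borel
set `B` for which there is a Borel probability measure `μ` with `μ(B + x) = 0` for all `x`. -/
def IsShy {G : Type*} [TopologicalSpace G] [AddCommGroup G] (A : Set G) : Prop :=
  ∃ B : Set G, A ⊆ B ∧ MeasurableSet[borel G] B ∧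
    ∃ μ : @Measure G (borel G), @IsProbabilityMeasure G (borel G) μ ∧
      ∀ x : G, μ ((fun g => g + x) '' B) = 0

/-- A set is *prevalent* if its complement is shy. -/
def Prevalent {G : Type*} [TopologicalSpace G] [AddCommGroup G] (A : Set G) : Prop :=
  IsShy Aᶜ

/-- Hausdorff dimension of a set, with the convention `dim ∅ = -1`. -/
def hDim {X : Type*} [EMetricSpace X] (A : Set X) : EReal :=
  if A.Nonempty then ((dimH A : ℝ≥0∞) : EReal) else -1

/-- The least number of closed balls of radius `δ` needed to cover `A` (`∞` if there is no
finite such cover). -/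
def coverNum {X : Type*} [PseudoMetricSpace X] (A : Set X) (δ : ℝ) : ℝ≥0∞ :=
  sInf {n : ℝ≥0∞ | ∃ t : Finset X, (t.card : ℝ≥0∞) = n ∧ A ⊆ ⋃ x ∈ t, closedBall x δ}

/-- Upper box dimension `limsup_{δ→0+} log N_δ(A) / log (1/δ)`, with the conventions
`dim ∅ = -1` and `dim A = ∞` if `A` is not totally bounded. -/
def upperBoxDim {X : Type*} [PseudoMetricSpace X] (A : Set X) : EReal :=
  if A.Nonempty then
    (if ∀ δ : ℝ, 0 < δ → coverNum A δ < ⊤ then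
      Filter.limsup (fun δ : ℝ => ((Real.log (coverNum A δ).toReal / Real.log (1 / δ) : ℝ) : EReal))
        (𝓝[>] (0 : ℝ))
    else ⊤)
  else -1

/-- Packing dimension, defined as the modified upper box dimension:
`dim_P A = inf { sup_i (upper box dim of A_i) : A = ⋃_{i∈ℕ} A_i }`. -/
def packingDim {X : Type*} [PseudoMetricSpace X] (A : Set X) : EReal :=
  sInf ((fun F : ℕ → Set X => ⨆ i, upperBoxDim (F i)) '' {F | A = ⋃ i, F i})

/-- Least number of closed balls of radius `r/2` needed to cover the closed ball `B(x,r)`. -/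
def ballCoverNum {X : Type*} [PseudoMetricSpace X] (x : X) (r : ℝ) : ℝ≥0∞ :=
  sInf {n : ℝ≥0∞ | ∃ t : Finset X, (t.card : ℝ≥0∞) = n ∧
    closedBall x r ⊆ ⋃ y ∈ t, closedBall y (r / 2)}

/-- `doublingNum X r` is the least `N` such that every closed ball of radius `r` in `X`
can be covered by `N` closed balls of radius `r/2`. -/
def doublingNum (X : Type*) [PseudoMetricSpace X] (r : ℝ) : ℝ≥0∞ :=
  ⨆ x : X, ballCoverNum x r

/-- A metric space is *non-exploding* if `log N(r) / log r → 0` as `r → 0+`. -/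
def NonExploding (X : Type*) [PseudoMetricSpace X] : Prop :=
  Tendsto (fun r : ℝ => Real.log (doublingNum X r).toReal / Real.log r) (𝓝[>] (0 : ℝ)) (𝓝 0)

/-- Hausdorff dimension of a measure: `dim_H μ = inf {dim_H B : B Borel, μ(B) > 0}`. -/
def measHDim {X : Type*} [EMetricSpace X] [MeasurableSpace X] (μ : Measure X) : EReal :=
  sInf {s : EReal | ∃ B : Set X, MeasurableSet B ∧ 0 < μ B ∧ s = hDim B}

/-- Packing dimension of a measure: `dim_P μ = inf {dim_P B : B Borel, μ(B) > 0}`. -/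
def measPDim {X : Type*} [MetricSpace X] [MeasurableSpace X] (μ : Measure X) : EReal :=
  sInf {s : EReal | ∃ B : Set X, MeasurableSet B ∧ 0 < μ B ∧ s = packingDim B}

/-- The generalized Hausdorff measure `H^φ` associated to a gauge function `φ`:
`H^φ(A) = lim_{δ→0+} inf { Σᵢ φ(diam Aᵢ) : A ⊆ ⋃ᵢ Aᵢ, diam Aᵢ ≤ δ }`. -/
def gaugeHMeasure {X : Type*} [PseudoMetricSpace X] (φ : ℝ → ℝ) (A : Set X) : ℝ≥0∞ :=
  ⨆ (δ : ℝ) (_ : 0 < δ), ⨅ (S : ℕ → Set X) (_ : A ⊆ ⋃ i, S i)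
    (_ : ∀ i, Metric.diam (S i) ≤ δ), ∑' i, ENNReal.ofReal (φ (Metric.diam (S i)))


end

noncomputable section

namespace SZ

abbrev II : Type := Set.Icc (0:ℝ) 1
abbrev XX : Type := C(II, ℝ)

noncomputable abbrev msXX : MeasurableSpace XX := borel XX
attribute [local instance] msXX

instance : BorelSpace XX := ⟨rfl⟩

def proj (x : ℝ) : II := ⟨max 0 (min 1 x), le_max_left _ _, max_le (by norm_num) (min_le_left _ _)⟩

lemma proj_val {x : ℝ} (h0 : 0 ≤ x) (h1 : x ≤ 1) : (proj x).1 = x := by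
  simp [proj, min_eq_right h1, max_eq_right, h0]

structure Setup where
  μ : Measure XX
  K : Set XX
  M : ℝ
  hM : 1 ≤ M
  hKmeas : MeasurableSet K
  hbd : ∀ f ∈ K, ∀ x : II, |f x| ≤ M
  del : ℝ → ℝ
  delpos : ∀ {ε : ℝ}, 0 < ε → 0 < del ε
  hdel : ∀ {ε : ℝ}, 0 < ε → ∀ f ∈ K, ∀ x y : II, |x.1 - y.1| ≤ del ε → |f x - f y| ≤ ε
  hprob : μ Set.univ = 1
  hKμ : 3/4 ≤ μ K

variable (S : Setup)

def tau (n : ℕ) : ℝ := S.M * (16:ℝ)⁻¹ ^ n / 400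

def Wd (n : ℕ) : ℝ := 2 * S.M * (4:ℝ)⁻¹ ^ n

lemma Mpos : (0:ℝ) < S.M := lt_of_lt_of_le one_pos S.hM

lemma tau_pos (n : ℕ) : 0 < tau S n :=
  div_pos (mul_pos (Mpos S) (pow_pos (by norm_num) n)) (by norm_num)

lemma tau_anti : Antitone (tau S) := by
  intro m n h
  have h2 : (16:ℝ)⁻¹ ^ n ≤ (16:ℝ)⁻¹ ^ m := pow_le_pow_of_le_one (by norm_num) (by norm_num) h
  unfold tau
  have := Mpos S
  have : S.M * (16:ℝ)⁻¹ ^ n ≤ S.M * (16:ℝ)⁻¹ ^ m := by nlinarith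
  linarith

lemma Wd_pos (n : ℕ) : 0 < Wd S n :=
  mul_pos (mul_pos (by norm_num) (Mpos S)) (pow_pos (by norm_num) n)

lemma Wd_succ (n : ℕ) : Wd S (n+1) = Wd S n / 4 := by
  unfold Wd; ring

lemma tau_le_Wd (n : ℕ) : tau S n ≤ Wd S n / 12 := by
  unfold tau Wd
  have h16 : (16:ℝ)⁻¹ ^ n ≤ (4:ℝ)⁻¹ ^ n :=
    pow_le_pow_left₀ (by norm_num) (by norm_num) n
  have hM := Mpos S
  have h1 : S.M * (16:ℝ)⁻¹ ^ n ≤ S.M * (4:ℝ)⁻¹ ^ n := by nlinarith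
  nlinarith [pow_pos (show (0:ℝ) < 4⁻¹ by norm_num) n]

structure ND where
  a : ℝ
  b : ℝ
  lo : ℝ
  hi : ℝ

def mid (d : ND) : ℝ := (d.a + d.b)/2

def rad (n : ℕ) (d : ND) : ℝ := min (S.del (tau S n)) ((d.b - d.a)/3)

def windowSet (n : ℕ) (d : ND) (c : ℝ) : Set XX :=
  {f ∈ S.K | |f (proj (mid d)) - c| ≤ 2 * tau S n}

def u (n : ℕ) : ℝ≥0∞ := ((16 * 4^n : ℕ) : ℝ≥0∞)⁻¹

def cutP (n : ℕ) (d : ND) (c : ℝ) : Prop :=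
  (d.lo + (d.hi - d.lo)/3 ≤ c ∧ c ≤ d.hi - (d.hi - d.lo)/3) ∧ S.μ (windowSet S n d c) ≤ u n

def cut (n : ℕ) (d : ND) : ℝ := if h : ∃ c, cutP S n d c then h.choose else 0

def chld (n : ℕ) (d : ND) : Bool → ND
  | false => ⟨mid d - rad S n d, mid d - rad S n d / 3, d.lo, cut S n d - tau S n⟩
  | true  => ⟨mid d + rad S n d / 3, mid d + rad S n d, cut S n d + tau S n, d.hi⟩

def nd : List Bool → ND
  | [] => ⟨1/3, 2/3, -S.M, S.M⟩
  | i :: s => chld S s.length (nd s) i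

structure Inv (n : ℕ) (d : ND) : Prop where
  ha : 1/3 ≤ d.a
  hb : d.b ≤ 2/3
  hab : d.a < d.b
  hlo : -S.M ≤ d.lo
  hhi : d.hi ≤ S.M
  hwlo : Wd S n ≤ d.hi - d.lo
  hwhi : d.hi - d.lo ≤ 2 * S.M * (2/3:ℝ)^n

lemma rad_pos {n : ℕ} {d : ND} (h : Inv S n d) : 0 < rad S n d :=
  lt_min (S.delpos (tau_pos S n)) (by linarith [h.hab])

lemma rad_le {n : ℕ} {d : ND} : rad S n d ≤ (d.b - d.a)/3 := min_le_right _ _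

lemma rad_le_del {n : ℕ} {d : ND} : rad S n d ≤ S.del (tau S n) := min_le_left _ _

lemma lo_lt_hi {n : ℕ} {d : ND} (h : Inv S n d) : d.lo < d.hi := by
  have := Wd_pos S n; linarith [h.hwlo]

/-- Pigeonhole: a good cut value exists. -/
lemma exists_cut {n : ℕ} {d : ND} (h : Inv S n d) : ∃ c, cutP S n d c := by
  classical
  set τ := tau S n with hτ
  have hτpos : 0 < τ := tau_pos S n
  set w := d.hi - d.lo with hw
  have hwpos : 0 < w := by have := Wd_pos S n; linarith [h.hwlo]
  set N : ℕ := 32 * 4 ^ n with hN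
  have hNpos : 0 < N := by positivity
  -- candidate cut values
  set c : ℕ → ℝ := fun j => d.lo + w/3 + 2*τ + 5*τ*j with hc
  have e1 : (16:ℝ)⁻¹^n * 4^n = (4:ℝ)⁻¹^n := by
    rw [← mul_pow]; norm_num
  have h5 : 5*τ*(N:ℝ) ≤ w/3 := by
    have h1 : 5*τ*(N:ℝ) = (2/5) * S.M * ((16:ℝ)⁻¹^n * 4^n) := by
      rw [hτ, hN]; unfold tau; push_cast; ring
    rw [h1, e1]
    have h3 : Wd S n ≤ w := h.hwlo
    unfold Wd at h3
    nlinarith [Mpos S, pow_pos (show (0:ℝ) < 4⁻¹ by norm_num) n]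
  -- each candidate is in the middle third
  have hcmem : ∀ j < N, d.lo + w/3 ≤ c j ∧ c j ≤ d.hi - w/3 := by
    intro j hj
    constructor
    · have : (0:ℝ) ≤ 5*τ*j := by positivity
      simp only [hc]; nlinarith
    · have hj' : (j:ℝ) ≤ (N:ℝ) - 1 := by
        have : (j:ℝ) + 1 ≤ N := by exact_mod_cast hj
        linarith
      have : 5*τ*(j:ℝ) + 5*τ ≤ 5*τ*(N:ℝ) := by nlinarith
      simp only [hc]
      have hwd : d.hi = d.lo + w := by rw [hw]; ring
      nlinarith
  -- windows are measurable
  have hmeas : ∀ j : ℕ, MeasurableSet (windowSet S n d (c j)) := by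
    intro j
    apply S.hKmeas.inter
    have hcont : Continuous fun f : XX => |f (proj (mid d)) - c j| :=
      (continuous_abs.comp ((continuous_eval_const _).sub continuous_const))
    exact (isClosed_le hcont continuous_const).measurableSet
  -- windows are pairwise disjoint
  have hdisj : ∀ j k : ℕ, j < k → Disjoint (windowSet S n d (c j)) (windowSet S n d (c k)) := by
    intro j k hjk
    rw [Set.disjoint_left]
    rintro f ⟨-, hfj⟩ ⟨-, hfk⟩
    have h1 : c k - c j = 5*τ*((k:ℝ) - j) := by simp only [hc]; ring
    have h2 : (1:ℝ) ≤ (k:ℝ) - j := by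
      have : (j:ℝ) + 1 ≤ k := by exact_mod_cast hjk
      linarith
    have h3 : |c k - c j| ≤ 4 * τ := by
      calc |c k - c j| = |(f (proj (mid d)) - c j) - (f (proj (mid d)) - c k)| := by ring_nf
        _ ≤ |f (proj (mid d)) - c j| + |f (proj (mid d)) - c k| := abs_sub _ _
        _ ≤ 2*τ + 2*τ := add_le_add hfj hfk
        _ = 4 * τ := by ring
    rw [h1, abs_of_nonneg (by nlinarith)] at h3
    nlinarith
  -- some window has small measure
  have hsum : ∑ j ∈ Finset.range N, S.μ (windowSet S n d (c j)) ≤ 1 := by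
    rw [← measure_biUnion_finset]
    · rw [← S.hprob]; exact measure_mono (Set.subset_univ _)
    · intro i _ j _ hij
      rcases lt_or_gt_of_ne hij with h' | h'
      · exact hdisj i j h'
      · exact (hdisj j i h').symm
    · intro j _; exact hmeas j
  by_contra hcon
  push_neg at hcon
  have hall : ∀ j ∈ Finset.range N, u n ≤ S.μ (windowSet S n d (c j)) := by
    intro j hj
    simp only [Finset.mem_range] at hj
    have h' := hcon (c j)
    rw [cutP] at h'
    push_neg at h'
    exact le_of_lt (h' ⟨(hcmem j hj).1, (hcmem j hj).2⟩)
  have hge : (N : ℝ≥0∞) * u n ≤ ∑ j ∈ Finset.range N, S.μ (windowSet S n d (c j)) := by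
    calc (N : ℝ≥0∞) * u n = ∑ _j ∈ Finset.range N, u n := by
          simp [Finset.sum_const, Finset.card_range, nsmul_eq_mul]
      _ ≤ _ := Finset.sum_le_sum hall
  have hNu : (N : ℝ≥0∞) * u n = 2 := by
    have : ((N:ℕ) : ℝ≥0∞) = 2 * ((16 * 4^n : ℕ) : ℝ≥0∞) := by
      rw [hN]; push_cast; ring
    have hpos : 0 < 16 * 4^n := by positivity
    rw [this, u, mul_assoc, ENNReal.mul_inv_cancel (Nat.cast_ne_zero.mpr hpos.ne')
      (ENNReal.natCast_ne_top _), mul_one]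
  rw [hNu] at hge
  have : (2:ℝ≥0∞) ≤ 1 := le_trans hge hsum
  norm_num at this

lemma cut_spec {n : ℕ} {d : ND} (h : Inv S n d) : cutP S n d (cut S n d) := by
  rw [cut, dif_pos (exists_cut S h)]
  exact (exists_cut S h).choose_spec

lemma inv_chld {n : ℕ} {d : ND} (h : Inv S n d) (i : Bool) : Inv S (n+1) (chld S n d i) := by
  have hr0 := rad_pos S h
  have hr3 : rad S n d ≤ (d.b - d.a)/3 := rad_le S
  have hcs := cut_spec S h
  have hτW := tau_le_Wd S n
  have hτpos := tau_pos S n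
  have hWlo := h.hwlo
  have hWpos := Wd_pos S n
  have hab := h.hab
  have hc1 := hcs.1.1
  have hc2 := hcs.1.2
  have hwhi := h.hwhi
  have hWq : Wd S (n+1) = Wd S n / 4 := Wd_succ S n
  have hpow : 2 * S.M * (2/3:ℝ)^(n+1) = (2/3) * (2 * S.M * (2/3:ℝ)^n) := by ring
  cases i
  · exact ⟨by simp only [chld, mid]; linarith [h.ha],
      by simp only [chld, mid]; linarith [h.hb],
      by simp only [chld, mid]; linarith,
      by simp only [chld]; exact h.hlo,
      by simp only [chld]; linarith [h.hhi],
      by simp only [chld]; linarith,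
      by simp only [chld]; nlinarith⟩
  · exact ⟨by simp only [chld, mid]; linarith [h.ha],
      by simp only [chld, mid]; linarith [h.hb],
      by simp only [chld, mid]; linarith,
      by simp only [chld]; linarith [h.hlo],
      by simp only [chld]; exact h.hhi,
      by simp only [chld]; linarith,
      by simp only [chld]; nlinarith⟩

lemma inv_nd : ∀ s : List Bool, Inv S s.length (nd S s) := by
  intro s
  induction s with
  | nil =>
      refine ⟨le_refl _, le_refl _, by norm_num [nd], le_refl _, le_refl _, ?_, ?_⟩ <;>
        · simp only [nd, Wd, List.length_nil, pow_zero, mul_one]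
          linarith [Mpos S]
  | cons i s ih =>
      exact inv_chld S ih i

end SZ

-- Part B : geometry accessors, Fs, corridor, aff, stg, continuity
namespace SZ

variable (S : Setup)

def ms (s : List Bool) : ℝ := mid (nd S s)
def rs (s : List Bool) : ℝ := rad S s.length (nd S s)
def cv (s : List Bool) : ℝ := cut S s.length (nd S s)

lemma nd_cons_false (s : List Bool) :
    nd S (false :: s) = ⟨ms S s - rs S s, ms S s - rs S s / 3, (nd S s).lo,
      cv S s - tau S s.length⟩ := rfl

lemma nd_cons_true (s : List Bool) :
    nd S (true :: s) = ⟨ms S s + rs S s / 3, ms S s + rs S s,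
      cv S s + tau S s.length, (nd S s).hi⟩ := rfl

lemma rs_pos (s : List Bool) : 0 < rs S s := rad_pos S (inv_nd S s)

lemma rs_le_del (s : List Bool) : rs S s ≤ S.del (tau S s.length) := rad_le_del S

lemma ms_sub_lt (s : List Bool) : (nd S s).a < ms S s - rs S s := by
  have h := inv_nd S s
  have h3 : rad S s.length (nd S s) ≤ ((nd S s).b - (nd S s).a)/3 := rad_le S
  have := h.hab
  unfold ms rs mid
  linarith

lemma ms_add_lt (s : List Bool) : ms S s + rs S s < (nd S s).b := by
  have h := inv_nd S s
  have h3 : rad S s.length (nd S s) ≤ ((nd S s).b - (nd S s).a)/3 := rad_le S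
  have := h.hab
  unfold ms rs mid
  linarith

lemma ms_mem (s : List Bool) : 1/3 ≤ ms S s ∧ ms S s ≤ 2/3 := by
  have h := inv_nd S s
  have := h.hab
  unfold ms mid
  constructor <;> linarith [h.ha, h.hb]

def mpt (s : List Bool) : II := proj (ms S s)

lemma mpt_val (s : List Bool) : (mpt S s).1 = ms S s := by
  have h := ms_mem S s
  exact proj_val (by linarith [h.1]) (by linarith [h.2])

lemma cv_mem (s : List Bool) :
    (nd S s).lo + ((nd S s).hi - (nd S s).lo)/3 ≤ cv S s ∧
      cv S s ≤ (nd S s).hi - ((nd S s).hi - (nd S s).lo)/3 :=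
  (cut_spec S (inv_nd S s)).1

lemma cv_window (s : List Bool) :
    S.μ (windowSet S s.length (nd S s) (cv S s)) ≤ u s.length :=
  (cut_spec S (inv_nd S s)).2

/-- the nested family of function classes -/
def Fs : List Bool → Set XX
  | [] => S.K
  | false :: s => {f | f ∈ Fs s ∧ f (mpt S s) ≤ cv S s - 2 * tau S s.length}
  | true :: s => {f | f ∈ Fs s ∧ cv S s + 2 * tau S s.length ≤ f (mpt S s)}

lemma Fs_subK : ∀ s : List Bool, Fs S s ⊆ S.K := by
  intro s
  induction s with
  | nil => exact fun f hf => hf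
  | cons i s ih => cases i <;> exact fun f hf => ih hf.1

/-- interval of a child is inside `[m - r, m + r]` -/
lemma child_sub (s : List Bool) (i : Bool) {x : ℝ}
    (h1 : (nd S (i :: s)).a ≤ x) (h2 : x ≤ (nd S (i :: s)).b) :
    ms S s - rs S s ≤ x ∧ x ≤ ms S s + rs S s := by
  have hr := rs_pos S s
  cases i
  · rw [nd_cons_false] at h1 h2
    dsimp at h1 h2
    constructor
    · exact h1
    · linarith
  · rw [nd_cons_true] at h1 h2
    dsimp at h1 h2
    constructor
    · linarith
    · exact h2

lemma child_sub' (s : List Bool) (i : Bool) {x : ℝ}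
    (h1 : (nd S (i :: s)).a ≤ x) (h2 : x ≤ (nd S (i :: s)).b) :
    (nd S s).a ≤ x ∧ x ≤ (nd S s).b := by
  have h := child_sub S s i h1 h2
  have := ms_sub_lt S s
  have := ms_add_lt S s
  constructor <;> linarith [h.1, h.2]

/-- variation bound via the modulus -/
lemma var_bound (s : List Bool) {f : XX} (hf : f ∈ S.K) (x : II)
    (h1 : ms S s - rs S s ≤ x.1) (h2 : x.1 ≤ ms S s + rs S s) :
    |f x - f (mpt S s)| ≤ tau S s.length := by
  apply S.hdel (tau_pos S s.length) f hf
  rw [mpt_val]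
  rw [abs_le]
  constructor <;> linarith [rs_le_del S s]

/-- corridor lemma: members of `Fs s` stay within `[lo, hi]` on the node interval -/
lemma corridor : ∀ s : List Bool, ∀ f ∈ Fs S s, ∀ x : II,
    (nd S s).a ≤ x.1 → x.1 ≤ (nd S s).b →
    (nd S s).lo ≤ f x ∧ f x ≤ (nd S s).hi := by
  intro s
  induction s with
  | nil =>
      intro f hf x _ _
      have := S.hbd f hf x
      rw [abs_le] at this
      simpa [nd] using this
  | cons i s ih =>
      intro f hf x h1 h2
      have hsub := child_sub S s i h1 h2
      have hsub' := child_sub' S s i h1 h2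
      have hvar := var_bound S s (Fs_subK S _ (by cases i <;> exact hf.1)) x hsub.1 hsub.2
      rw [abs_le] at hvar
      cases i
      · have hcond : f (mpt S s) ≤ cv S s - 2 * tau S s.length := hf.2
        have hbase := ih f hf.1 x hsub'.1 hsub'.2
        rw [nd_cons_false]
        exact ⟨hbase.1, by dsimp; linarith [hvar.1, hvar.2]⟩
      · have hcond : cv S s + 2 * tau S s.length ≤ f (mpt S s) := hf.2
        have hbase := ih f hf.1 x hsub'.1 hsub'.2
        rw [nd_cons_true]
        exact ⟨by dsimp; linarith [hvar.1, hvar.2], hbase.2⟩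

/-- boundary padding values -/
def vL (s : List Bool) : ℝ := (nd S s).lo - tau S (s.length - 1)
def vR (s : List Bool) : ℝ := (nd S s).hi + tau S (s.length - 1)

lemma vL_cons_false (s : List Bool) : vL S (false :: s) = (nd S s).lo - tau S s.length := by
  simp [vL, nd_cons_false]

lemma vR_cons_false (s : List Bool) : vR S (false :: s) = cv S s := by
  simp [vR, nd_cons_false]

lemma vL_cons_true (s : List Bool) : vL S (true :: s) = cv S s := by
  simp [vL, nd_cons_true]

lemma vR_cons_true (s : List Bool) : vR S (true :: s) = (nd S s).hi + tau S s.length := by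
  simp [vR, nd_cons_true]

lemma tau_pred_le (s : List Bool) : tau S s.length ≤ tau S (s.length - 1) :=
  tau_anti S (Nat.sub_le _ _)

lemma vL_lt_lo (s : List Bool) : vL S s < (nd S s).lo := by
  unfold vL; linarith [tau_pos S (s.length - 1)]

lemma hi_lt_vR (s : List Bool) : (nd S s).hi < vR S s := by
  unfold vR; linarith [tau_pos S (s.length - 1)]

lemma vL_le_vR (s : List Bool) : vL S s ≤ vR S s := by
  have := lo_lt_hi S (inv_nd S s)
  have := vL_lt_lo S s
  have := hi_lt_vR S s
  linarith

/-- affine interpolation -/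
def aff (x₁ y₁ x₂ y₂ x : ℝ) : ℝ := y₁ + (x - x₁) * ((y₂ - y₁) / (x₂ - x₁))

lemma aff_left (x₁ y₁ x₂ y₂ : ℝ) : aff x₁ y₁ x₂ y₂ x₁ = y₁ := by simp [aff]

lemma aff_right {x₁ x₂ : ℝ} (h : x₁ ≠ x₂) (y₁ y₂ : ℝ) : aff x₁ y₁ x₂ y₂ x₂ = y₂ := by
  have h2 : x₂ - x₁ ≠ 0 := sub_ne_zero.mpr (Ne.symm h)
  unfold aff; rw [mul_div_cancel₀ _ h2]; ring

lemma aff_mem {x₁ x₂ y₁ y₂ x : ℝ} (hx : x₁ < x₂) (hy : y₁ ≤ y₂)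
    (h1 : x₁ ≤ x) (h2 : x ≤ x₂) : y₁ ≤ aff x₁ y₁ x₂ y₂ x ∧ aff x₁ y₁ x₂ y₂ x ≤ y₂ := by
  have hpos : 0 < x₂ - x₁ := by linarith
  have hq : 0 ≤ (y₂ - y₁) / (x₂ - x₁) := div_nonneg (by linarith) (le_of_lt hpos)
  constructor
  · unfold aff; nlinarith
  · unfold aff
    have h3 : (x - x₁) * ((y₂ - y₁) / (x₂ - x₁)) ≤ (x₂ - x₁) * ((y₂ - y₁) / (x₂ - x₁)) := by
      apply mul_le_mul_of_nonneg_right (by linarith) hq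
    have h4 : (x₂ - x₁) * ((y₂ - y₁) / (x₂ - x₁)) = y₂ - y₁ := by
      field_simp
    linarith

lemma aff_cont (x₁ y₁ x₂ y₂ : ℝ) : Continuous (aff x₁ y₁ x₂ y₂) := by
  unfold aff; fun_prop

/-- the approximation stages of the function `g` -/
def stg : ℕ → List Bool → ℝ → ℝ
  | 0, s, x => aff (nd S s).a (vL S s) (nd S s).b (vR S s) x
  | (k+1), s, x =>
      if x ≤ ms S s - rs S s then
        aff (nd S s).a (vL S s) (ms S s - rs S s) ((nd S s).lo - tau S s.length) x
      else if x ≤ ms S s - rs S s / 3 then stg k (false :: s) x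
      else if x ≤ ms S s + rs S s / 3 then cv S s
      else if x ≤ ms S s + rs S s then stg k (true :: s) x
      else aff (ms S s + rs S s) ((nd S s).hi + tau S s.length) (nd S s).b (vR S s) x

lemma stg_succ (k : ℕ) (s : List Bool) (x : ℝ) :
    stg S (k+1) s x =
      if x ≤ ms S s - rs S s then
        aff (nd S s).a (vL S s) (ms S s - rs S s) ((nd S s).lo - tau S s.length) x
      else if x ≤ ms S s - rs S s / 3 then stg S k (false :: s) x
      else if x ≤ ms S s + rs S s / 3 then cv S s
      else if x ≤ ms S s + rs S s then stg S k (true :: s) x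
      else aff (ms S s + rs S s) ((nd S s).hi + tau S s.length) (nd S s).b (vR S s) x := rfl

lemma stg_left (k : ℕ) : ∀ s : List Bool, stg S k s (nd S s).a = vL S s := by
  induction k with
  | zero => intro s; exact aff_left _ _ _ _
  | succ k _ =>
      intro s
      rw [stg_succ, if_pos (le_of_lt (ms_sub_lt S s))]
      exact aff_left _ _ _ _

lemma stg_right (k : ℕ) : ∀ s : List Bool, stg S k s (nd S s).b = vR S s := by
  induction k with
  | zero => intro s; exact aff_right (ne_of_lt (inv_nd S s).hab) _ _
  | succ k _ =>
      intro s
      have h1 := ms_add_lt S s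
      have h2 := ms_sub_lt S s
      have hr := rs_pos S s
      have hab := (inv_nd S s).hab
      rw [stg_succ, if_neg (by push_neg; linarith), if_neg (by push_neg; linarith),
        if_neg (by push_neg; linarith), if_neg (by push_neg; linarith)]
      exact aff_right (by linarith) _ _

/-- values at the four internal junction points -/
lemma stg_j1 (k : ℕ) (s : List Bool) :
    stg S k (false :: s) (ms S s - rs S s) = (nd S s).lo - tau S s.length := by
  have := stg_left S k (false :: s)
  rw [nd_cons_false] at this
  rw [vL_cons_false] at this
  exact this

lemma stg_j2 (k : ℕ) (s : List Bool) :
    stg S k (false :: s) (ms S s - rs S s / 3) = cv S s := by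
  have := stg_right S k (false :: s)
  rw [nd_cons_false] at this
  rw [vR_cons_false] at this
  exact this

lemma stg_j3 (k : ℕ) (s : List Bool) :
    stg S k (true :: s) (ms S s + rs S s / 3) = cv S s := by
  have := stg_left S k (true :: s)
  rw [nd_cons_true] at this
  rw [vL_cons_true] at this
  exact this

lemma stg_j4 (k : ℕ) (s : List Bool) :
    stg S k (true :: s) (ms S s + rs S s) = (nd S s).hi + tau S s.length := by
  have := stg_right S k (true :: s)
  rw [nd_cons_true] at this
  rw [vR_cons_true] at this
  exact this

lemma stg_cont (k : ℕ) : ∀ s : List Bool, Continuous (stg S k s) := by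
  induction k with
  | zero => intro s; exact aff_cont _ _ _ _
  | succ k ih =>
      intro s
      have hr := rs_pos S s
      have h4 : Continuous fun x => if x ≤ ms S s + rs S s then stg S k (true :: s) x
          else aff (ms S s + rs S s) ((nd S s).hi + tau S s.length) (nd S s).b (vR S s) x := by
        apply Continuous.if_le (ih _) (aff_cont _ _ _ _) continuous_id continuous_const
        intro x hx
        simp only [id_eq] at hx
        subst hx
        rw [stg_j4, aff_left]
      have h3 : Continuous fun x => if x ≤ ms S s + rs S s / 3 then cv S s
          else if x ≤ ms S s + rs S s then stg S k (true :: s) x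
          else aff (ms S s + rs S s) ((nd S s).hi + tau S s.length) (nd S s).b (vR S s) x := by
        apply Continuous.if_le continuous_const h4 continuous_id continuous_const
        intro x hx
        simp only [id_eq] at hx
        subst hx
        rw [if_pos (by linarith), stg_j3]
      have h2 : Continuous fun x => if x ≤ ms S s - rs S s / 3 then stg S k (false :: s) x
          else if x ≤ ms S s + rs S s / 3 then cv S s
          else if x ≤ ms S s + rs S s then stg S k (true :: s) x
          else aff (ms S s + rs S s) ((nd S s).hi + tau S s.length) (nd S s).b (vR S s) x := by
        apply Continuous.if_le (ih _) h3 continuous_id continuous_const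
        intro x hx
        simp only [id_eq] at hx
        subst hx
        rw [stg_j2, if_pos (by linarith)]
      have h1 : Continuous fun x => stg S (k+1) s x := by
        simp only [stg_succ]
        apply Continuous.if_le (aff_cont _ _ _ _) h2 continuous_id continuous_const
        intro x hx
        simp only [id_eq] at hx
        subst hx
        rw [aff_right (ne_of_lt (ms_sub_lt S s)), if_pos (by linarith), stg_j1]
      exact h1

end SZ

-- Part C : G-range, Cauchy estimates, the limit function gl, region lemmas
namespace SZ

variable (S : Setup)

lemma lo_le_cv (s : List Bool) : (nd S s).lo ≤ cv S s := by
  have h := cv_mem S s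
  have := lo_lt_hi S (inv_nd S s)
  linarith [h.1]

lemma cv_le_hi (s : List Bool) : cv S s ≤ (nd S s).hi := by
  have h := cv_mem S s
  have := lo_lt_hi S (inv_nd S s)
  linarith [h.2]

lemma vL_le_cons (s : List Bool) (i : Bool) : vL S s ≤ vL S (i :: s) := by
  have h1 := tau_pred_le S s
  have h2 := lo_le_cv S s
  cases i
  · rw [vL_cons_false]; unfold vL; linarith [tau_anti S (Nat.sub_le s.length 1)]
  · rw [vL_cons_true]; unfold vL; linarith [tau_pos S (s.length - 1)]

lemma vR_cons_le (s : List Bool) (i : Bool) : vR S (i :: s) ≤ vR S s := by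
  have h1 := tau_pred_le S s
  have h2 := cv_le_hi S s
  cases i
  · rw [vR_cons_false]; unfold vR; linarith [tau_pos S (s.length - 1)]
  · rw [vR_cons_true]; unfold vR; linarith

lemma stg_mem (k : ℕ) : ∀ s : List Bool, ∀ x : ℝ, (nd S s).a ≤ x → x ≤ (nd S s).b →
    vL S s ≤ stg S k s x ∧ stg S k s x ≤ vR S s := by
  induction k with
  | zero =>
      intro s x h1 h2
      exact aff_mem (inv_nd S s).hab (vL_le_vR S s) h1 h2
  | succ k ih =>
      intro s x h1 h2
      have hr := rs_pos S s
      have hmlt := ms_sub_lt S s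
      have hmgt := ms_add_lt S s
      have hτn := tau_pos S s.length
      have hτp := tau_pred_le S s
      have hlohi := lo_lt_hi S (inv_nd S s)
      have hvL := vL_lt_lo S s
      have hvR := hi_lt_vR S s
      have hvLdef : vL S s = (nd S s).lo - tau S (s.length - 1) := rfl
      have hvRdef : vR S s = (nd S s).hi + tau S (s.length - 1) := rfl
      rw [stg_succ]
      split_ifs with h h' h'' h'''
      · have := aff_mem (y₁ := vL S s) (y₂ := (nd S s).lo - tau S s.length)
          hmlt (by linarith) h1 h
        constructor <;> linarith [this.1, this.2]
      · have := ih (false :: s) x (by rw [nd_cons_false]; dsimp; linarith) (by rw [nd_cons_false]; exact h')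
        have hl := vL_le_cons S s false
        have hrr := vR_cons_le S s false
        constructor <;> linarith [this.1, this.2]
      · constructor
        · linarith [lo_le_cv S s]
        · linarith [cv_le_hi S s]
      · have := ih (true :: s) x (by rw [nd_cons_true]; dsimp; linarith) (by rw [nd_cons_true]; exact h''')
        have hl := vL_le_cons S s true
        have hrr := vR_cons_le S s true
        constructor <;> linarith [this.1, this.2]
      · have := aff_mem (y₁ := (nd S s).hi + tau S s.length) (y₂ := vR S s)
          (by linarith : ms S s + rs S s < (nd S s).b) (by linarith)
          (by linarith : ms S s + rs S s ≤ x) h2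
        constructor <;> linarith [this.1, this.2]

lemma tau_le_pow (n : ℕ) : tau S (n - 1) ≤ S.M * (2/3:ℝ)^n := by
  have hM := Mpos S
  cases n with
  | zero =>
      simp only [Nat.zero_sub, pow_zero, mul_one]
      unfold tau
      simp only [pow_zero]
      nlinarith
  | succ n =>
      simp only [Nat.succ_sub_one]
      unfold tau
      have h1 : (16:ℝ)⁻¹ ^ n ≤ (2/3:ℝ)^n := pow_le_pow_left₀ (by norm_num) (by norm_num) n
      have h2 : (2/3:ℝ)^(n+1) = (2/3) * (2/3:ℝ)^n := by ring
      have h3 : (0:ℝ) < (2/3:ℝ)^n := pow_pos (by norm_num) n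
      rw [h2]
      nlinarith

lemma osc_bound (s : List Bool) : vR S s - vL S s ≤ 4 * S.M * (2/3:ℝ)^s.length := by
  have h1 := (inv_nd S s).hwhi
  have h2 := tau_le_pow S s.length
  unfold vL vR
  nlinarith [Mpos S]

lemma stg_diff (k : ℕ) : ∀ s : List Bool, ∀ x : ℝ, (nd S s).a ≤ x → x ≤ (nd S s).b →
    |stg S (k+1) s x - stg S k s x| ≤ 4 * S.M * (2/3:ℝ)^(s.length + k) := by
  induction k with
  | zero =>
      intro s x h1 h2
      have ha := stg_mem S 1 s x h1 h2
      have hb := stg_mem S 0 s x h1 h2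
      have := osc_bound S s
      rw [abs_le, Nat.add_zero]
      constructor <;> linarith [ha.1, ha.2, hb.1, hb.2]
  | succ k ih =>
      intro s x h1 h2
      have hr := rs_pos S s
      have hpow : (0:ℝ) < 4 * S.M * (2/3:ℝ)^(s.length + (k+1)) := by
        have := Mpos S
        positivity
      have hexp : ∀ i : Bool, (i :: s).length + k = s.length + (k+1) := by
        intro i; simp [List.length_cons]; ring
      rw [stg_succ S (k+1) s x, stg_succ S k s x]
      split_ifs with h h' h'' h'''
      · simp only [sub_self, abs_zero]; linarith
      · have := ih (false :: s) x (by rw [nd_cons_false]; dsimp; linarith) (by rw [nd_cons_false]; exact h')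
        rwa [hexp false] at this
      · simp only [sub_self, abs_zero]; linarith
      · have := ih (true :: s) x (by rw [nd_cons_true]; dsimp; linarith) (by rw [nd_cons_true]; exact h''')
        rwa [hexp true] at this
      · simp only [sub_self, abs_zero]; linarith

lemma stg_desc (k : ℕ) (s : List Bool) (i : Bool) (x : ℝ)
    (h1 : (nd S (i :: s)).a ≤ x) (h2 : x ≤ (nd S (i :: s)).b) :
    stg S (k+1) s x = stg S k (i :: s) x := by
  have hr := rs_pos S s
  cases i
  · rw [nd_cons_false] at h1 h2
    dsimp at h1 h2
    rw [stg_succ]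
    by_cases hc : x ≤ ms S s - rs S s
    · have hx : x = ms S s - rs S s := le_antisymm hc h1
      subst hx
      rw [if_pos le_rfl, aff_right (ne_of_lt (ms_sub_lt S s)), stg_j1]
    · rw [if_neg hc, if_pos h2]
  · rw [nd_cons_true] at h1 h2
    dsimp at h1 h2
    rw [stg_succ]
    rw [if_neg (by push_neg; linarith), if_neg (by push_neg; linarith)]
    by_cases hc : x ≤ ms S s + rs S s / 3
    · have hx : x = ms S s + rs S s / 3 := le_antisymm hc h1
      subst hx
      rw [if_pos le_rfl, stg_j3]
    · rw [if_neg hc, if_pos h2]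

lemma stg_zero_eq : ∀ s : List Bool, ∀ k : ℕ, ∀ x : ℝ,
    (nd S s).a ≤ x → x ≤ (nd S s).b →
    stg S (s.length + k) [] x = stg S k s x := by
  intro s
  induction s with
  | nil => intro k x _ _; rw [List.length_nil, Nat.zero_add]
  | cons i s ih =>
      intro k x h1 h2
      have hsub := child_sub' S s i h1 h2
      have hlen : (i :: s).length + k = s.length + (k + 1) := by
        simp [List.length_cons]; ring
      rw [hlen, ih (k+1) x hsub.1 hsub.2, stg_desc S k s i x h1 h2]

/-- real-line version of the stage functions, extended by constants -/
def phi (n : ℕ) (x : ℝ) : ℝ :=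
  if x ≤ 1/3 then vL S [] else if x ≤ 2/3 then stg S n [] x else vR S []

lemma nd_nil_a : (nd S []).a = 1/3 := rfl
lemma nd_nil_b : (nd S []).b = 2/3 := rfl

lemma phi_cont (n : ℕ) : Continuous (phi S n) := by
  have hin : Continuous fun x : ℝ => if x ≤ 2/3 then stg S n [] x else vR S [] := by
    apply Continuous.if_le (stg_cont S n []) continuous_const continuous_id continuous_const
    intro x hx
    simp only [id_eq] at hx
    subst hx
    have := stg_right S n []
    rw [nd_nil_b] at this
    rw [this]
  apply Continuous.if_le continuous_const hin continuous_id continuous_const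
  intro x hx
  simp only [id_eq] at hx
  subst hx
  have := stg_left S n []
  rw [nd_nil_a] at this
  rw [if_pos (by norm_num : (1:ℝ)/3 ≤ 2/3), this]

def gN (n : ℕ) : XX := ⟨fun x : II => phi S n x.1, (phi_cont S n).comp continuous_subtype_val⟩

lemma gN_apply (n : ℕ) (x : II) : gN S n x = phi S n x.1 := rfl

lemma gN_eq_stg (n : ℕ) (x : II) (h1 : 1/3 ≤ x.1) (h2 : x.1 ≤ 2/3) :
    gN S n x = stg S n [] x.1 := by
  rw [gN_apply, phi]
  by_cases hc : x.1 ≤ 1/3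
  · have hx : x.1 = 1/3 := le_antisymm hc h1
    rw [if_pos hc, hx]
    have := stg_left S n []
    rw [nd_nil_a] at this
    rw [this]
  · rw [if_neg hc, if_pos h2]

lemma gN_dist (n : ℕ) : dist (gN S n) (gN S (n+1)) ≤ 4 * S.M * (2/3:ℝ)^n := by
  have hpos : (0:ℝ) ≤ 4 * S.M * (2/3:ℝ)^n := by have := Mpos S; positivity
  rw [ContinuousMap.dist_le hpos]
  intro x
  rw [gN_apply, gN_apply, Real.dist_eq]
  unfold phi
  split_ifs with h h'
  · simpa using hpos
  · rw [abs_sub_comm]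
    have := stg_diff S n [] x.1 (by rw [nd_nil_a]; linarith [not_le.mp h]) (by rw [nd_nil_b]; exact h')
    simpa using this
  · simpa using hpos

lemma gN_cauchy : CauchySeq (gN S) :=
  cauchySeq_of_le_geometric (2/3) (4 * S.M) (by norm_num) (gN_dist S)

lemma gl_ex : ∃ l : XX, Tendsto (gN S) atTop (𝓝 l) :=
  cauchySeq_tendsto_of_complete (gN_cauchy S)

def gl : XX := (gl_ex S).choose

lemma gl_tendsto : Tendsto (gN S) atTop (𝓝 (gl S)) := (gl_ex S).choose_spec

lemma gl_apply_tendsto (x : II) : Tendsto (fun n => gN S n x) atTop (𝓝 (gl S x)) := by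
  have hc : Continuous fun h : XX => h x := continuous_eval_const x
  exact (hc.tendsto (gl S)).comp (gl_tendsto S)

lemma gl_eq_of_stage (x : II) (v : ℝ) (N₀ : ℕ) (h : ∀ n, N₀ ≤ n → gN S n x = v) :
    gl S x = v := by
  have h2 : Tendsto (fun n => gN S n x) atTop (𝓝 v) :=
    tendsto_const_nhds.congr' (eventually_atTop.2 ⟨N₀, fun n hn => (h n hn).symm⟩)
  exact tendsto_nhds_unique (gl_apply_tendsto S x) h2

lemma gl_mem_Icc (x : II) (lo' hi' : ℝ) (N₀ : ℕ)
    (h : ∀ n, N₀ ≤ n → gN S n x ∈ Set.Icc lo' hi') : gl S x ∈ Set.Icc lo' hi' :=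
  isClosed_Icc.mem_of_tendsto (gl_apply_tendsto S x)
    (eventually_atTop.2 ⟨N₀, h⟩)

lemma x_in_root {s : List Bool} {x : ℝ} (h1 : (nd S s).a ≤ x) (h2 : x ≤ (nd S s).b) :
    1/3 ≤ x ∧ x ≤ 2/3 := by
  have h := inv_nd S s
  constructor <;> linarith [h.ha, h.hb]

/-- region lemma: left approach region -/
lemma gl_left (s : List Bool) (x : II) (h1 : (nd S s).a ≤ x.1) (h2 : x.1 ≤ ms S s - rs S s) :
    gl S x = aff (nd S s).a (vL S s) (ms S s - rs S s) ((nd S s).lo - tau S s.length) x.1 := by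
  have hmlt := ms_sub_lt S s
  have hmgt := ms_add_lt S s
  have hr := rs_pos S s
  have hb : x.1 ≤ (nd S s).b := by linarith
  have hroot := x_in_root S h1 hb
  apply gl_eq_of_stage S x _ (s.length + 1)
  intro n hn
  obtain ⟨k, rfl⟩ : ∃ k, n = s.length + (k + 1) := ⟨n - s.length - 1, by omega⟩
  rw [gN_eq_stg S _ x hroot.1 hroot.2, stg_zero_eq S s (k+1) x.1 h1 hb, stg_succ, if_pos h2]

/-- region lemma: central gap -/
lemma gl_gap (s : List Bool) (x : II) (h1 : ¬(x.1 ≤ ms S s - rs S s / 3))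
    (h2 : x.1 ≤ ms S s + rs S s / 3) : gl S x = cv S s := by
  have hmlt := ms_sub_lt S s
  have hmgt := ms_add_lt S s
  have hr := rs_pos S s
  push_neg at h1
  have ha : (nd S s).a ≤ x.1 := by linarith
  have hb : x.1 ≤ (nd S s).b := by linarith
  have hroot := x_in_root S ha hb
  apply gl_eq_of_stage S x _ (s.length + 1)
  intro n hn
  obtain ⟨k, rfl⟩ : ∃ k, n = s.length + (k + 1) := ⟨n - s.length - 1, by omega⟩
  rw [gN_eq_stg S _ x hroot.1 hroot.2, stg_zero_eq S s (k+1) x.1 ha hb, stg_succ,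
    if_neg (by push_neg; linarith), if_neg (by push_neg; linarith), if_pos h2]

/-- region lemma: right approach region -/
lemma gl_right (s : List Bool) (x : II) (h1 : ¬(x.1 ≤ ms S s + rs S s))
    (h2 : x.1 ≤ (nd S s).b) :
    gl S x = aff (ms S s + rs S s) ((nd S s).hi + tau S s.length) (nd S s).b (vR S s) x.1 := by
  have hmlt := ms_sub_lt S s
  have hmgt := ms_add_lt S s
  have hr := rs_pos S s
  push_neg at h1
  have ha : (nd S s).a ≤ x.1 := by linarith
  have hroot := x_in_root S ha h2
  apply gl_eq_of_stage S x _ (s.length + 1)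
  intro n hn
  obtain ⟨k, rfl⟩ : ∃ k, n = s.length + (k + 1) := ⟨n - s.length - 1, by omega⟩
  rw [gN_eq_stg S _ x hroot.1 hroot.2, stg_zero_eq S s (k+1) x.1 ha h2, stg_succ,
    if_neg (by push_neg; linarith), if_neg (by push_neg; linarith),
    if_neg (by push_neg; linarith), if_neg (by push_neg; linarith)]

/-- region lemma: global range on a node interval -/
lemma gl_range (s : List Bool) (x : II) (h1 : (nd S s).a ≤ x.1) (h2 : x.1 ≤ (nd S s).b) :
    vL S s ≤ gl S x ∧ gl S x ≤ vR S s := by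
  have hroot := x_in_root S h1 h2
  have := gl_mem_Icc S x (vL S s) (vR S s) s.length (by
    intro n hn
    obtain ⟨k, rfl⟩ : ∃ k, n = s.length + k := ⟨n - s.length, by omega⟩
    rw [gN_eq_stg S _ x hroot.1 hroot.2, stg_zero_eq S s k x.1 h1 h2]
    exact Set.mem_Icc.mpr (stg_mem S k s x.1 h1 h2))
  exact ⟨this.1, this.2⟩

lemma gl_outL (x : II) (h : x.1 ≤ 1/3) : gl S x = vL S [] := by
  apply gl_eq_of_stage S x _ 0
  intro n _
  rw [gN_apply, phi, if_pos h]

lemma gl_outR (x : II) (h : ¬(x.1 ≤ 2/3)) : gl S x = vR S [] := by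
  apply gl_eq_of_stage S x _ 0
  intro n _
  rw [gN_apply, phi, if_neg (by push_neg at h ⊢; linarith), if_neg h]

end SZ

-- Part D : survivors, branch, unique zero, measure bookkeeping
namespace SZ

variable (S : Setup)

def Dset (s : List Bool) : Set XX :=
  {f ∈ S.K | |f (mpt S s) - cv S s| < 2 * tau S s.length}

lemma Dset_bound (s : List Bool) : S.μ (Dset S s) ≤ u s.length := by
  refine le_trans (measure_mono ?_) (cv_window S s)
  rintro f ⟨hfK, hf⟩
  exact ⟨hfK, le_of_lt hf⟩

def Lvl (n : ℕ) : Set XX := ⋃ s ∈ {t : List Bool | t.length = n}, Dset S s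

lemma bUnion_length_bound : ∀ (n : ℕ) (G : List Bool → Set XX) (v : ℝ≥0∞),
    (∀ s : List Bool, s.length = n → S.μ (G s) ≤ v) →
    S.μ (⋃ s ∈ {t : List Bool | t.length = n}, G s) ≤ 2^n * v := by
  intro n
  induction n with
  | zero =>
      intro G v hG
      have hset : (⋃ s ∈ {t : List Bool | t.length = 0}, G s) = G [] := by
        apply Set.eq_of_subset_of_subset
        · intro f hf
          simp only [Set.mem_iUnion] at hf
          obtain ⟨s, hs, hf⟩ := hf
          rw [Set.mem_setOf_eq] at hs
          have hnil : s = [] := List.length_eq_zero_iff.mp hs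
          rwa [hnil] at hf
        · intro f hf
          simp only [Set.mem_iUnion]
          exact ⟨[], rfl, hf⟩
      rw [hset, pow_zero, one_mul]
      exact hG [] rfl
  | succ n ih =>
      intro G v hG
      have hset : (⋃ s ∈ {t : List Bool | t.length = n+1}, G s) =
          (⋃ s ∈ {t : List Bool | t.length = n}, G (false :: s)) ∪
          (⋃ s ∈ {t : List Bool | t.length = n}, G (true :: s)) := by
        apply Set.eq_of_subset_of_subset
        · intro f hf
          simp only [Set.mem_iUnion, Set.mem_union] at hf ⊢
          obtain ⟨s, hs, hf⟩ := hf
          match s, hs with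
          | i :: t, hs =>
            have ht : t.length = n := by simpa using hs
            cases i
            · exact Or.inl ⟨t, ht, hf⟩
            · exact Or.inr ⟨t, ht, hf⟩
        · intro f hf
          simp only [Set.mem_iUnion, Set.mem_union] at hf ⊢
          rcases hf with ⟨t, ht, hf⟩ | ⟨t, ht, hf⟩
          · exact ⟨false :: t, by simpa using ht, hf⟩
          · exact ⟨true :: t, by simpa using ht, hf⟩
      rw [hset]
      have h1 := ih (fun s => G (false :: s)) v (fun s hs => hG _ (by simpa using hs))
      have h2 := ih (fun s => G (true :: s)) v (fun s hs => hG _ (by simpa using hs))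
      calc S.μ _ ≤ _ + _ := measure_union_le _ _
        _ ≤ 2^n * v + 2^n * v := add_le_add h1 h2
        _ = 2^(n+1) * v := by ring

lemma Lvl_bound (n : ℕ) : S.μ (Lvl S n) ≤ 16⁻¹ * (2⁻¹ : ℝ≥0∞)^n := by
  have h1 : S.μ (Lvl S n) ≤ 2^n * u n := by
    apply bUnion_length_bound S n (Dset S) (u n)
    intro s hs
    rw [← hs]
    exact Dset_bound S s
  refine le_trans h1 (le_of_eq ?_)
  rw [u]
  have hc : ((16 * 4^n : ℕ) : ℝ≥0∞) = 16 * 4^n := by push_cast; ring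
  have h24 : (2:ℝ≥0∞) * 4⁻¹ = 2⁻¹ := by
    rw [show (4:ℝ≥0∞) = 2 * 2 by norm_num, ENNReal.mul_inv (by norm_num) (by norm_num),
      ← mul_assoc, ENNReal.mul_inv_cancel (by norm_num) (by norm_num), one_mul]
  rw [hc, ENNReal.mul_inv (by norm_num) (by simp), ENNReal.inv_pow,
    show ((2:ℝ≥0∞)^n * (16⁻¹ * (4⁻¹)^n)) = 16⁻¹ * ((2 * 4⁻¹)^n) by rw [mul_pow]; ring,
    h24]

def Bad : Set XX := ⋃ n, Lvl S n

lemma Bad_bound : S.μ (Bad S) ≤ 8⁻¹ := by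
  calc S.μ (Bad S) ≤ ∑' n, S.μ (Lvl S n) := measure_iUnion_le _
    _ ≤ ∑' n, 16⁻¹ * (2⁻¹ : ℝ≥0∞)^n := ENNReal.tsum_le_tsum (Lvl_bound S)
    _ = 16⁻¹ * ∑' n, (2⁻¹ : ℝ≥0∞)^n := ENNReal.tsum_mul_left
    _ = 16⁻¹ * 2 := by rw [ENNReal.tsum_geometric, ENNReal.one_sub_inv_two, inv_inv]
    _ = 8⁻¹ := by
        rw [show (16:ℝ≥0∞) = 8 * 2 by norm_num, ENNReal.mul_inv (by norm_num) (by norm_num),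
          mul_assoc, ENNReal.inv_mul_cancel (by norm_num) (by norm_num), mul_one]

def Surv : Set XX := S.K \ Bad S

lemma Surv_pos : 0 < S.μ (Surv S) := by
  by_contra hcon
  push_neg at hcon
  have h0 : S.μ (Surv S) = 0 := le_antisymm (le_of_not_gt (by simpa using hcon)) (zero_le)
  have hsub : S.K ⊆ Surv S ∪ Bad S := by
    intro f hf
    by_cases hb : f ∈ Bad S
    · exact Or.inr hb
    · exact Or.inl ⟨hf, hb⟩
  have : S.μ S.K ≤ S.μ (Surv S) + S.μ (Bad S) :=
    le_trans (measure_mono hsub) (measure_union_le _ _)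
  rw [h0, zero_add] at this
  have h34 : (3/4 : ℝ≥0∞) ≤ 8⁻¹ := le_trans S.hKμ (le_trans this (Bad_bound S))
  have h2 := ENNReal.toReal_mono (by norm_num) h34
  rw [ENNReal.toReal_inv] at h2
  norm_num [ENNReal.toReal_div] at h2

/-- the branch of a function through the tree -/
def br (f : XX) : ℕ → List Bool
  | 0 => []
  | n+1 =>
      (if cv S (br f n) + 2 * tau S (br f n).length ≤ f (mpt S (br f n)) then true
       else false) :: br f n

lemma br_succ (f : XX) (n : ℕ) :
    br S f (n+1) =
      (if cv S (br S f n) + 2 * tau S (br S f n).length ≤ f (mpt S (br S f n)) then true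
       else false) :: br S f n := rfl

lemma br_mem (f : XX) (hfK : f ∈ S.K) (hf : ∀ s : List Bool, f ∉ Dset S s) :
    ∀ n, f ∈ Fs S (br S f n) := by
  intro n
  induction n with
  | zero => exact hfK
  | succ n ih =>
      set s := br S f n with hs
      have hD := hf s
      rw [Dset] at hD
      simp only [Set.mem_setOf_eq, not_and] at hD
      have habs : 2 * tau S s.length ≤ |f (mpt S s) - cv S s| := le_of_not_gt (hD hfK)
      rw [br_succ, ← hs]
      by_cases hc : cv S s + 2 * tau S s.length ≤ f (mpt S s)
      · rw [if_pos hc]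
        exact ⟨ih, hc⟩
      · rw [if_neg hc]
        push_neg at hc
        refine ⟨ih, ?_⟩
        rcases le_or_gt (f (mpt S s)) (cv S s - 2 * tau S s.length) with h | h
        · exact h
        · exfalso
          rcases abs_cases (f (mpt S s) - cv S s) with ⟨he, _⟩ | ⟨he, _⟩ <;> rw [he] at habs <;>
            linarith

/-- survivors avoid all discard sets -/
lemma surv_avoid {f : XX} (hf : f ∈ Surv S) : ∀ s : List Bool, f ∉ Dset S s := by
  intro s hD
  apply hf.2
  refine Set.mem_iUnion.mpr ⟨s.length, ?_⟩
  rw [Lvl]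
  exact Set.mem_biUnion rfl hD

lemma child_a_lt (s : List Bool) (i : Bool) : (nd S s).a < (nd S (i :: s)).a := by
  have h1 := ms_sub_lt S s
  have hr := rs_pos S s
  cases i
  · rw [nd_cons_false]; dsimp; linarith
  · rw [nd_cons_true]; dsimp; linarith

lemma child_b_lt (s : List Bool) (i : Bool) : (nd S (i :: s)).b < (nd S s).b := by
  have h1 := ms_add_lt S s
  have hr := rs_pos S s
  cases i
  · rw [nd_cons_false]; dsimp; linarith
  · rw [nd_cons_true]; dsimp; linarith

lemma child_len (s : List Bool) (i : Bool) :
    (nd S (i :: s)).b - (nd S (i :: s)).a ≤ (2/9) * ((nd S s).b - (nd S s).a) := by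
  have h3 : rad S s.length (nd S s) ≤ ((nd S s).b - (nd S s).a)/3 := rad_le S
  have hrs : rs S s ≤ ((nd S s).b - (nd S s).a)/3 := h3
  cases i
  · rw [nd_cons_false]; dsimp; linarith
  · rw [nd_cons_true]; dsimp; linarith

def Aseq (f : XX) (n : ℕ) : ℝ := (nd S (br S f n)).a
def Bseq (f : XX) (n : ℕ) : ℝ := (nd S (br S f n)).b

lemma Aseq_succ_gt (f : XX) (n : ℕ) : Aseq S f n < Aseq S f (n+1) := by
  rw [Aseq, Aseq, br_succ]
  exact child_a_lt S _ _

lemma Bseq_succ_lt (f : XX) (n : ℕ) : Bseq S f (n+1) < Bseq S f n := by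
  rw [Bseq, Bseq, br_succ]
  exact child_b_lt S _ _

lemma Aseq_lt_Bseq (f : XX) (n : ℕ) : Aseq S f n < Bseq S f n :=
  (inv_nd S (br S f n)).hab

lemma Aseq_mono (f : XX) : Monotone (Aseq S f) :=
  monotone_nat_of_le_succ fun n => le_of_lt (Aseq_succ_gt S f n)

lemma Bseq_anti (f : XX) : Antitone (Bseq S f) :=
  antitone_nat_of_succ_le fun n => le_of_lt (Bseq_succ_lt S f n)

lemma len_le (f : XX) : ∀ n, Bseq S f n - Aseq S f n ≤ (1/3) * (2/9:ℝ)^n := by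
  intro n
  induction n with
  | zero =>
      rw [Aseq, Bseq]
      show (nd S []).b - (nd S []).a ≤ _
      rw [nd_nil_a, nd_nil_b]
      norm_num
  | succ n ih =>
      have h := child_len S (br S f n)
        (if cv S (br S f n) + 2 * tau S (br S f n).length ≤ f (mpt S (br S f n)) then true
         else false)
      rw [← br_succ] at h
      calc Bseq S f (n+1) - Aseq S f (n+1) ≤ (2/9) * (Bseq S f n - Aseq S f n) := h
        _ ≤ (2/9) * ((1/3) * (2/9:ℝ)^n) := by linarith
        _ = (1/3) * (2/9:ℝ)^(n+1) := by ring

lemma Aseq_le_Bseq_all (f : XX) (k n : ℕ) : Aseq S f k ≤ Bseq S f n := by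
  rcases le_total k n with h | h
  · exact le_trans (Aseq_mono S f h) (le_of_lt (Aseq_lt_Bseq S f n))
  · exact le_trans (le_of_lt (Aseq_lt_Bseq S f k)) (Bseq_anti S f h)

def xstar (f : XX) : ℝ := ⨆ n, Aseq S f n

lemma Aseq_bdd (f : XX) : BddAbove (Set.range (Aseq S f)) :=
  ⟨Bseq S f 0, by rintro y ⟨k, rfl⟩; exact Aseq_le_Bseq_all S f k 0⟩

lemma Aseq_le_xstar (f : XX) (n : ℕ) : Aseq S f n ≤ xstar S f :=
  le_ciSup (Aseq_bdd S f) n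

lemma xstar_le_Bseq (f : XX) (n : ℕ) : xstar S f ≤ Bseq S f n :=
  ciSup_le fun k => Aseq_le_Bseq_all S f k n

lemma Aseq_lt_xstar (f : XX) (n : ℕ) : Aseq S f n < xstar S f :=
  lt_of_lt_of_le (Aseq_succ_gt S f n) (Aseq_le_xstar S f (n+1))

lemma xstar_lt_Bseq (f : XX) (n : ℕ) : xstar S f < Bseq S f n :=
  lt_of_le_of_lt (xstar_le_Bseq S f (n+1)) (Bseq_succ_lt S f n)

lemma xstar_mem (f : XX) : 1/3 ≤ xstar S f ∧ xstar S f ≤ 2/3 := by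
  constructor
  · have := Aseq_le_xstar S f 0
    rw [Aseq] at this
    show _ ≤ _
    calc (1/3:ℝ) = (nd S []).a := (nd_nil_a S).symm
      _ ≤ xstar S f := this
  · have := xstar_le_Bseq S f 0
    calc xstar S f ≤ (nd S []).b := this
      _ = 2/3 := nd_nil_b S

def xhat (f : XX) : II :=
  ⟨xstar S f, ⟨by linarith [(xstar_mem S f).1], by linarith [(xstar_mem S f).2]⟩⟩

lemma tendsto_Aseq (f : XX) : Tendsto (Aseq S f) atTop (𝓝 (xstar S f)) :=
  tendsto_atTop_ciSup (Aseq_mono S f) (Aseq_bdd S f)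

lemma tendsto_Bseq (f : XX) : Tendsto (Bseq S f) atTop (𝓝 (xstar S f)) := by
  have h1 : Tendsto (fun n => Bseq S f n - Aseq S f n) atTop (𝓝 0) := by
    apply squeeze_zero (fun n => le_of_lt (by linarith [Aseq_lt_Bseq S f n])) (len_le S f)
    have := tendsto_pow_atTop_nhds_zero_of_lt_one (by norm_num : (0:ℝ) ≤ 2/9)
      (by norm_num : (2/9:ℝ) < 1)
    have h2 : Tendsto (fun n => (1/3) * (2/9:ℝ)^n) atTop (𝓝 ((1/3) * 0)) :=
      this.const_mul (1/3)
    simpa using h2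
  have h2 := h1.add (tendsto_Aseq S f)
  simpa using h2

end SZ

-- Part E : each survivor has a unique zero after subtracting gl
namespace SZ

variable (S : Setup)

lemma a_mem01 (s : List Bool) : 0 ≤ (nd S s).a ∧ (nd S s).a ≤ 1 := by
  have h := inv_nd S s
  constructor <;> linarith [h.ha, h.hb, h.hab]

lemma b_mem01 (s : List Bool) : 0 ≤ (nd S s).b ∧ (nd S s).b ≤ 1 := by
  have h := inv_nd S s
  constructor <;> linarith [h.ha, h.hb, h.hab]

def Apt (f : XX) (n : ℕ) : II :=
  ⟨Aseq S f n, (a_mem01 S (br S f n)).1, (a_mem01 S (br S f n)).2⟩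

def Bpt (f : XX) (n : ℕ) : II :=
  ⟨Bseq S f n, (b_mem01 S (br S f n)).1, (b_mem01 S (br S f n)).2⟩

lemma F_pos_at_A (f : XX) (hm : ∀ n, f ∈ Fs S (br S f n)) (n : ℕ) :
    0 < f (Apt S f n) - gl S (Apt S f n) := by
  set s := br S f n with hs
  have hval : (Apt S f n).1 = (nd S s).a := rfl
  have hgl : gl S (Apt S f n) = vL S s := by
    rw [gl_left S s (Apt S f n) (le_of_eq hval.symm) (by rw [hval]; exact le_of_lt (ms_sub_lt S s)),
      hval, aff_left]
  have hcor := (corridor S s f (hm n) (Apt S f n) (le_of_eq hval.symm) (by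
    rw [hval]; exact le_of_lt (inv_nd S s).hab)).1
  have := vL_lt_lo S s
  rw [hgl]
  linarith

lemma F_neg_at_B (f : XX) (hm : ∀ n, f ∈ Fs S (br S f n)) (n : ℕ) :
    f (Bpt S f n) - gl S (Bpt S f n) < 0 := by
  set s := br S f n with hs
  have hval : (Bpt S f n).1 = (nd S s).b := rfl
  have hgl : gl S (Bpt S f n) = vR S s := by
    rw [gl_right S s (Bpt S f n) (by rw [hval]; push_neg; exact ms_add_lt S s)
      (le_of_eq hval), hval, aff_right (ne_of_lt (ms_add_lt S s))]
  have hcor := (corridor S s f (hm n) (Bpt S f n) (by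
    rw [hval]; exact le_of_lt (inv_nd S s).hab) (le_of_eq hval)).2
  have := hi_lt_vR S s
  rw [hgl]
  linarith

lemma tendsto_Apt (f : XX) : Tendsto (Apt S f) atTop (𝓝 (xhat S f)) := by
  rw [tendsto_subtype_rng]
  exact tendsto_Aseq S f

lemma tendsto_Bpt (f : XX) : Tendsto (Bpt S f) atTop (𝓝 (xhat S f)) := by
  rw [tendsto_subtype_rng]
  exact tendsto_Bseq S f

lemma zero_at_xhat (f : XX) (hm : ∀ n, f ∈ Fs S (br S f n)) :
    f (xhat S f) - gl S (xhat S f) = 0 := by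
  have hF : Continuous fun y : II => f y - gl S y := f.continuous.sub (gl S).continuous
  have hA : Tendsto (fun n => f (Apt S f n) - gl S (Apt S f n)) atTop
      (𝓝 (f (xhat S f) - gl S (xhat S f))) :=
    (hF.continuousAt.tendsto).comp (tendsto_Apt S f)
  have hB : Tendsto (fun n => f (Bpt S f n) - gl S (Bpt S f n)) atTop
      (𝓝 (f (xhat S f) - gl S (xhat S f))) :=
    (hF.continuousAt.tendsto).comp (tendsto_Bpt S f)
  have h1 : 0 ≤ f (xhat S f) - gl S (xhat S f) :=
    ge_of_tendsto hA (Eventually.of_forall fun n => (F_pos_at_A S f hm n).le)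
  have h2 : f (xhat S f) - gl S (xhat S f) ≤ 0 :=
    le_of_tendsto hB (Eventually.of_forall fun n => (F_neg_at_B S f hm n).le)
  linarith

lemma eq_xhat_of_zero (f : XX) (hfK : f ∈ S.K) (hm : ∀ n, f ∈ Fs S (br S f n))
    (habs : ∀ s : List Bool, 2 * tau S s.length ≤ |f (mpt S s) - cv S s|)
    (x : II) (hx : f x - gl S x = 0) : x = xhat S f := by
  have hxv : f x = gl S x := sub_eq_zero.mp hx
  have hbd := S.hbd f hfK x
  rw [abs_le] at hbd
  -- rule out the outer regions
  by_cases hL : x.1 ≤ 1/3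
  · exfalso
    have : gl S x = vL S [] := gl_outL S x hL
    have hvl : vL S [] = -S.M - tau S 0 := rfl
    have := tau_pos S 0
    rw [hxv] at hbd
    rw [‹gl S x = vL S []›, hvl] at hbd
    linarith [hbd.1]
  by_cases hR : ¬ (x.1 ≤ 2/3)
  · exfalso
    have : gl S x = vR S [] := gl_outR S x hR
    have hvr : vR S [] = S.M + tau S 0 := rfl
    have := tau_pos S 0
    rw [hxv] at hbd
    rw [‹gl S x = vR S []›, hvr] at hbd
    linarith [hbd.2]
  push_neg at hL hR
  by_cases hall : ∀ n, Aseq S f n ≤ x.1 ∧ x.1 ≤ Bseq S f n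
  · -- x is in all intervals: it equals x*
    have hdist : ∀ n, |x.1 - xstar S f| ≤ (1/3) * (2/9:ℝ)^n := by
      intro n
      have h1 := (hall n).1
      have h2 := (hall n).2
      have h3 := Aseq_le_xstar S f n
      have h4 := xstar_le_Bseq S f n
      have h5 := len_le S f n
      rw [abs_le]
      constructor <;> linarith
    have h0 : Tendsto (fun n => (1/3) * (2/9:ℝ)^n) atTop (𝓝 0) := by
      have := tendsto_pow_atTop_nhds_zero_of_lt_one (by norm_num : (0:ℝ) ≤ 2/9)
        (by norm_num : (2/9:ℝ) < 1)
      have h2 : Tendsto (fun n => (1/3) * (2/9:ℝ)^n) atTop (𝓝 ((1/3) * 0)) :=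
        this.const_mul (1/3)
      simpa using h2
    have : |x.1 - xstar S f| ≤ 0 := ge_of_tendsto h0 (Eventually.of_forall hdist)
    have : x.1 - xstar S f = 0 := abs_nonpos_iff.mp this
    exact Subtype.ext (show x.1 = xstar S f by linarith)
  · exfalso
    have hex : ∃ n, ¬ (Aseq S f n ≤ x.1 ∧ x.1 ≤ Bseq S f n) := not_forall.mp hall
    have hn₀ := Nat.find_spec hex
    have hn₀pos : Nat.find hex ≠ 0 := by
      intro h0
      apply hn₀
      rw [h0]
      constructor
      · show Aseq S f 0 ≤ x.1
        rw [Aseq]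
        show (nd S []).a ≤ x.1
        rw [nd_nil_a]
        linarith
      · show x.1 ≤ Bseq S f 0
        rw [Bseq]
        show x.1 ≤ (nd S []).b
        rw [nd_nil_b]
        exact hR
    obtain ⟨n, hn⟩ : ∃ n, Nat.find hex = n + 1 := ⟨Nat.find hex - 1, by omega⟩
    have hPn : Aseq S f n ≤ x.1 ∧ x.1 ≤ Bseq S f n :=
      not_not.mp (Nat.find_min hex (by omega))
    have hn₀' : ¬ (Aseq S f (n+1) ≤ x.1 ∧ x.1 ≤ Bseq S f (n+1)) := by
      rw [← hn]; exact hn₀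
    set s := br S f n with hsdef
    have hP1 : (nd S s).a ≤ x.1 := hPn.1
    have hP2 : x.1 ≤ (nd S s).b := hPn.2
    have hrpos := rs_pos S s
    have hτpos := tau_pos S s.length
    have hτp := tau_pred_le S s
    have hmlt := ms_sub_lt S s
    have hmgt := ms_add_lt S s
    have hlohi := lo_lt_hi S (inv_nd S s)
    have hcorr := corridor S s f (hm n) x hP1 hP2
    by_cases hx1 : x.1 ≤ ms S s - rs S s
    · -- left region
      have hgl := gl_left S s x hP1 hx1
      have := (aff_mem (y₁ := vL S s) (y₂ := (nd S s).lo - tau S s.length)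
        hmlt (by unfold vL; linarith) hP1 hx1).2
      rw [hxv, hgl] at hcorr
      linarith [hcorr.1]
    by_cases hx2 : x.1 ≤ ms S s - rs S s / 3
    · -- interval of child `false`
      push_neg at hx1
      have cond0a : (nd S (false :: s)).a ≤ x.1 := by rw [nd_cons_false]; exact le_of_lt hx1
      have cond0b : x.1 ≤ (nd S (false :: s)).b := by rw [nd_cons_false]; exact hx2
      by_cases hc : cv S s + 2 * tau S s.length ≤ f (mpt S s)
      · -- f goes right, x is in the left child: sibling separation
        have hvar := var_bound S s hfK x (by linarith) (by linarith)
        rw [abs_le] at hvar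
        have hglr := (gl_range S (false :: s) x cond0a cond0b).2
        rw [vR_cons_false] at hglr
        rw [hxv] at hvar
        linarith [hvar.2]
      · -- f also goes left : x is in the next interval, contradiction with minimality
        apply hn₀'
        constructor
        · show Aseq S f (n+1) ≤ x.1
          rw [Aseq, br_succ, ← hsdef, if_neg hc, nd_cons_false]
          exact le_of_lt hx1
        · show x.1 ≤ Bseq S f (n+1)
          rw [Bseq, br_succ, ← hsdef, if_neg hc, nd_cons_false]
          exact hx2
    by_cases hx3 : x.1 ≤ ms S s + rs S s / 3
    · -- central gap
      push_neg at hx1 hx2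
      have hgl := gl_gap S s x (by push_neg; exact hx2) hx3
      have hvar := var_bound S s hfK x (by linarith) (by linarith)
      rw [abs_le] at hvar
      have h2τ := habs s
      rw [hxv, hgl] at hvar
      rcases abs_cases (f (mpt S s) - cv S s) with ⟨he, _⟩ | ⟨he, _⟩ <;> rw [he] at h2τ <;>
        linarith [hvar.1, hvar.2]
    by_cases hx4 : x.1 ≤ ms S s + rs S s
    · -- interval of child `true`
      push_neg at hx3
      have cond1a : (nd S (true :: s)).a ≤ x.1 := by rw [nd_cons_true]; exact le_of_lt hx3
      have cond1b : x.1 ≤ (nd S (true :: s)).b := by rw [nd_cons_true]; exact hx4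
      by_cases hc : cv S s + 2 * tau S s.length ≤ f (mpt S s)
      · -- f also goes right: contradiction with minimality
        apply hn₀'
        constructor
        · show Aseq S f (n+1) ≤ x.1
          rw [Aseq, br_succ, ← hsdef, if_pos hc, nd_cons_true]
          exact le_of_lt hx3
        · show x.1 ≤ Bseq S f (n+1)
          rw [Bseq, br_succ, ← hsdef, if_pos hc, nd_cons_true]
          exact hx4
      · -- f goes left, x in right child: sibling separation
        have h2 := hm (n+1)
        rw [br_succ, ← hsdef, if_neg hc] at h2
        have hcnd : f (mpt S s) ≤ cv S s - 2 * tau S s.length := h2.2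
        have hvar := var_bound S s hfK x (by linarith) (by linarith)
        rw [abs_le] at hvar
        have hgll := (gl_range S (true :: s) x cond1a cond1b).1
        rw [vL_cons_true] at hgll
        rw [hxv] at hvar
        linarith [hvar.2]
    · -- right region
      push_neg at hx4
      have hgl := gl_right S s x (by push_neg; exact hx4) hP2
      have := (aff_mem (y₁ := (nd S s).hi + tau S s.length) (y₂ := vR S s)
        hmgt (by unfold vR; linarith) (le_of_lt hx4) hP2).1
      rw [hxv, hgl] at hcorr
      linarith [hcorr.2]

theorem surv_unique (f : XX) (hf : f ∈ Surv S) : ∃! x : II, f x - gl S x = 0 := by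
  have hfK : f ∈ S.K := hf.1
  have hD := surv_avoid S hf
  have hm := br_mem S f hfK hD
  have habs : ∀ s : List Bool, 2 * tau S s.length ≤ |f (mpt S s) - cv S s| := by
    intro s
    by_contra hcon
    push_neg at hcon
    exact hD s ⟨hfK, hcon⟩
  exact ⟨xhat S f, zero_at_xhat S f hm, fun y hy => eq_xhat_of_zero S f hfK hm habs y hy⟩

theorem mu_pos : 0 < S.μ {f : XX | ∃! x : II, f x - gl S x = 0} :=
  lt_of_lt_of_le (Surv_pos S) (measure_mono fun f hf => surv_unique S f hf)

end SZ

-- Part F : building a Setup from an arbitrary Borel probability measure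
namespace SZ

attribute [local instance] msXX

section Build

variable (μ : Measure XX) [IsProbabilityMeasure μ]

def BallSet (m : ℕ) : Set XX := {f : XX | ∀ x : II, |f x| ≤ (m:ℝ)}

lemma BallSet_closed (m : ℕ) : IsClosed (BallSet m) := by
  have : BallSet m = ⋂ x : II, {f : XX | |f x| ≤ (m:ℝ)} := by
    ext f; simp [BallSet, Set.mem_iInter]
  rw [this]
  refine isClosed_iInter fun x => ?_
  exact isClosed_le (continuous_abs.comp (continuous_eval_const x)) continuous_const

lemma BallSet_mono : Monotone BallSet := by
  intro m n hmn f hf x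
  calc |f x| ≤ (m:ℝ) := hf x
    _ ≤ (n:ℝ) := by exact_mod_cast hmn

lemma BallSet_iUnion : (⋃ m, BallSet m) = Set.univ := by
  refine Set.eq_univ_of_forall fun f => ?_
  refine Set.mem_iUnion.mpr ⟨⌈‖f‖⌉₊, fun x => ?_⟩
  calc |f x| = ‖f x‖ := rfl
    _ ≤ ‖f‖ := f.norm_coe_le_norm x
    _ ≤ (⌈‖f‖⌉₊ : ℝ) := Nat.le_ceil _

lemma exists_ball : ∃ m : ℕ, 7/8 < μ (BallSet m) := by
  have h1 : μ (⋃ m, BallSet m) = ⨆ m, μ (BallSet m) :=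
    Directed.measure_iUnion (BallSet_mono.directed_le)
  rw [BallSet_iUnion, measure_univ] at h1
  have h2 : (7/8 : ℝ≥0∞) < ⨆ m, μ (BallSet m) := by
    rw [← h1]
    exact ENNReal.div_lt_of_lt_mul (by norm_num)
  exact lt_iSup_iff.mp h2

def ESet (k j : ℕ) : Set XX :=
  ⋂ (x : II) (y : II) (_ : |x.1 - y.1| ≤ 1/(j+1:ℝ)), {f : XX | |f x - f y| ≤ (2:ℝ)⁻¹^k}

lemma ESet_closed (k j : ℕ) : IsClosed (ESet k j) := by
  refine isClosed_iInter fun x => isClosed_iInter fun y => isClosed_iInter fun _ => ?_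
  exact isClosed_le (continuous_abs.comp (((continuous_eval_const x)).sub
    (continuous_eval_const y))) continuous_const

lemma ESet_mono (k : ℕ) : Monotone (ESet k) := by
  intro m n hmn f hf
  refine Set.mem_iInter.mpr fun x => Set.mem_iInter.mpr fun y => Set.mem_iInter.mpr fun hxy => ?_
  have hmem := Set.mem_iInter.mp (Set.mem_iInter.mp (Set.mem_iInter.mp hf x) y)
  refine hmem ?_
  have h1 : (1:ℝ)/(n+1) ≤ 1/(m+1) := by
    apply one_div_le_one_div_of_le
    · positivity
    · exact_mod_cast Nat.add_le_add_right hmn 1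
  linarith

lemma ESet_iUnion (k : ℕ) : (⋃ j, ESet k j) = Set.univ := by
  refine Set.eq_univ_of_forall fun f => ?_
  have huc : UniformContinuous f := CompactSpace.uniformContinuous_of_continuous f.continuous
  rw [Metric.uniformContinuous_iff] at huc
  obtain ⟨δ, hδ, hf⟩ := huc (ε := (2:ℝ)⁻¹^k) (by positivity)
  obtain ⟨j, hj⟩ := exists_nat_one_div_lt hδ
  refine Set.mem_iUnion.mpr ⟨j, ?_⟩
  refine Set.mem_iInter.mpr fun x => Set.mem_iInter.mpr fun y => Set.mem_iInter.mpr fun hxy => ?_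
  have hdist : dist x y < δ := by
    rw [Subtype.dist_eq, Real.dist_eq]
    calc |x.1 - y.1| ≤ 1/(j+1:ℝ) := hxy
      _ < δ := hj
  have := hf hdist
  rw [Real.dist_eq] at this
  exact le_of_lt this

lemma exists_eset (k : ℕ) (t : ℝ≥0∞) (ht : t < 1) : ∃ j : ℕ, t < μ (ESet k j) := by
  have h1 : μ (⋃ j, ESet k j) = ⨆ j, μ (ESet k j) :=
    Directed.measure_iUnion ((ESet_mono k).directed_le)
  rw [ESet_iUnion, measure_univ] at h1
  have h2 : t < ⨆ j, μ (ESet k j) := by rw [← h1]; exact ht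
  exact lt_iSup_iff.mp h2

end Build

end SZ

-- Part G : the Setup, and the main results
namespace SZ

attribute [local instance] msXX

section Build2

variable (μ : Measure XX) [IsProbabilityMeasure μ]

def mball : ℕ := (exists_ball μ).choose

lemma mball_spec : 7/8 < μ (BallSet (mball μ)) := (exists_ball μ).choose_spec

lemma eps_ne_zero (k : ℕ) : ((2:ℝ≥0∞)⁻¹^k * 16⁻¹) ≠ 0 :=
  mul_ne_zero (pow_ne_zero k (by norm_num)) (by norm_num)

lemma eps_le_one (k : ℕ) : ((2:ℝ≥0∞)⁻¹^k * 16⁻¹) ≤ 1 :=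
  mul_le_one' (pow_le_one' (by exact ENNReal.inv_le_one.mpr (by norm_num)) k)
    (ENNReal.inv_le_one.mpr (by norm_num))

lemma eset_target_lt (k : ℕ) : (1 - (2:ℝ≥0∞)⁻¹^k * 16⁻¹) < 1 :=
  ENNReal.sub_lt_self (by norm_num) (by norm_num) (eps_ne_zero k)

def jfun (k : ℕ) : ℕ := (exists_eset μ k _ (eset_target_lt k)).choose

lemma jfun_spec (k : ℕ) : 1 - (2:ℝ≥0∞)⁻¹^k * 16⁻¹ < μ (ESet k (jfun μ k)) :=
  (exists_eset μ k _ (eset_target_lt k)).choose_spec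

lemma eset_compl_bound (k : ℕ) :
    μ (ESet k (jfun μ k))ᶜ ≤ (2:ℝ≥0∞)⁻¹^k * 16⁻¹ := by
  have h1 := jfun_spec μ k
  have h2 : μ (ESet k (jfun μ k))ᶜ = 1 - μ (ESet k (jfun μ k)) :=
    prob_compl_eq_one_sub (ESet_closed k (jfun μ k)).measurableSet
  rw [h2]
  calc 1 - μ (ESet k (jfun μ k)) ≤ 1 - (1 - (2:ℝ≥0∞)⁻¹^k * 16⁻¹) :=
        tsub_le_tsub_left (le_of_lt h1) 1
    _ = (2:ℝ≥0∞)⁻¹^k * 16⁻¹ := ENNReal.sub_sub_cancel (by norm_num) (eps_le_one k)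

lemma ball_compl_bound : μ (BallSet (mball μ))ᶜ ≤ 8⁻¹ := by
  have h1 := mball_spec μ
  have h2 : μ (BallSet (mball μ))ᶜ = 1 - μ (BallSet (mball μ)) :=
    prob_compl_eq_one_sub (BallSet_closed (mball μ)).measurableSet
  rw [h2]
  calc 1 - μ (BallSet (mball μ)) ≤ 1 - 7/8 := tsub_le_tsub_left (le_of_lt h1) 1
    _ = 8⁻¹ := by
        refine ENNReal.sub_eq_of_eq_add ((ENNReal.div_lt_top (by norm_num) (by norm_num)).ne) ?_
        rw [← one_div, ENNReal.div_add_div_same,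
          show (1:ℝ≥0∞) + 7 = 8 by norm_num]
        exact (ENNReal.div_self (by norm_num) (by norm_num)).symm

def Kset : Set XX := BallSet (mball μ) ∩ ⋂ k, ESet k (jfun μ k)

lemma Kset_closed : IsClosed (Kset μ) :=
  (BallSet_closed _).inter (isClosed_iInter fun k => ESet_closed k _)

lemma two_mul_inv_16 : (2:ℝ≥0∞) * 16⁻¹ = 8⁻¹ := by
  rw [show (16:ℝ≥0∞) = 2 * 8 by norm_num, ENNReal.mul_inv (by norm_num) (by norm_num),
    ← mul_assoc, ENNReal.mul_inv_cancel (by norm_num) (by norm_num), one_mul]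

lemma Kset_compl_bound : μ (Kset μ)ᶜ ≤ 4⁻¹ := by
  have hsub : (Kset μ)ᶜ ⊆ (BallSet (mball μ))ᶜ ∪ ⋃ k, (ESet k (jfun μ k))ᶜ := by
    rw [Kset, Set.compl_inter, Set.compl_iInter]
  calc μ (Kset μ)ᶜ ≤ μ ((BallSet (mball μ))ᶜ) + μ (⋃ k, (ESet k (jfun μ k))ᶜ) :=
        le_trans (measure_mono hsub) (measure_union_le _ _)
    _ ≤ 8⁻¹ + ∑' k, μ (ESet k (jfun μ k))ᶜ :=
        add_le_add (ball_compl_bound μ) (measure_iUnion_le _)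
    _ ≤ 8⁻¹ + ∑' k, (2:ℝ≥0∞)⁻¹^k * 16⁻¹ :=
        add_le_add le_rfl (ENNReal.tsum_le_tsum (eset_compl_bound μ))
    _ = 8⁻¹ + 2 * 16⁻¹ := by
        rw [ENNReal.tsum_mul_right, ENNReal.tsum_geometric, ENNReal.one_sub_inv_two, inv_inv]
    _ = 8⁻¹ + 8⁻¹ := by rw [two_mul_inv_16]
    _ = 4⁻¹ := by
        rw [show (8:ℝ≥0∞)⁻¹ = 2⁻¹ * 4⁻¹ by
            rw [show (8:ℝ≥0∞) = 2 * 4 by norm_num,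
              ENNReal.mul_inv (by norm_num) (by norm_num)],
          ← add_mul, ENNReal.inv_two_add_inv_two, one_mul]

lemma Kset_bound : 3/4 ≤ μ (Kset μ) := by
  have h1 := measure_add_measure_compl (μ := μ) (Kset_closed μ).measurableSet
  rw [measure_univ] at h1
  have h2 : (3/4 : ℝ≥0∞) + 4⁻¹ = 1 := by
    rw [← one_div, ENNReal.div_add_div_same, show (3:ℝ≥0∞) + 1 = 4 by norm_num]
    exact ENNReal.div_self (by norm_num) (by norm_num)
  have h3 : (3/4 : ℝ≥0∞) + 4⁻¹ ≤ μ (Kset μ) + 4⁻¹ := by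
    rw [h2]
    calc (1:ℝ≥0∞) = μ (Kset μ) + μ (Kset μ)ᶜ := h1.symm
      _ ≤ μ (Kset μ) + 4⁻¹ := add_le_add le_rfl (Kset_compl_bound μ)
  exact (ENNReal.add_le_add_iff_right (by norm_num)).mp h3

def Mreal : ℝ := (mball μ : ℝ) + 1

def kl (ε : ℝ) : ℕ :=
  if h : 0 < ε then (exists_pow_lt_of_lt_one h (by norm_num : (2:ℝ)⁻¹ < 1)).choose else 0

lemma kl_spec {ε : ℝ} (h : 0 < ε) : (2:ℝ)⁻¹ ^ (kl ε) < ε := by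
  rw [kl, dif_pos h]
  exact (exists_pow_lt_of_lt_one h (by norm_num : (2:ℝ)⁻¹ < 1)).choose_spec

def delf (ε : ℝ) : ℝ := 1 / ((jfun μ (kl ε) : ℝ) + 1)

lemma delf_pos (ε : ℝ) : 0 < delf μ ε := by
  rw [delf]; positivity

lemma Kset_in_eset (k : ℕ) : Kset μ ⊆ ESet k (jfun μ k) := fun f hf =>
  Set.mem_iInter.mp hf.2 k

lemma hdel_proof : ∀ {ε : ℝ}, 0 < ε → ∀ f ∈ Kset μ, ∀ x y : II,
    |x.1 - y.1| ≤ delf μ ε → |f x - f y| ≤ ε := by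
  intro ε hε f hf x y hxy
  have hE := Kset_in_eset μ (kl ε) hf
  have hmem := Set.mem_iInter.mp (Set.mem_iInter.mp (Set.mem_iInter.mp hE x) y) hxy
  calc |f x - f y| ≤ (2:ℝ)⁻¹ ^ (kl ε) := hmem
    _ ≤ ε := le_of_lt (kl_spec hε)

def theSetup : Setup where
  μ := μ
  K := Kset μ
  M := Mreal μ
  hM := by
    rw [Mreal]
    have : (0:ℝ) ≤ (mball μ : ℝ) := Nat.cast_nonneg _
    linarith
  hKmeas := (Kset_closed μ).measurableSet
  hbd := by
    intro f hf x
    have := hf.1 x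
    rw [Mreal]
    calc |f x| ≤ (mball μ : ℝ) := this
      _ ≤ (mball μ : ℝ) + 1 := by linarith
  del := delf μ
  delpos := fun h => delf_pos μ _
  hdel := fun hε => hdel_proof μ hε
  hprob := measure_univ
  hKμ := Kset_bound μ

theorem part1 : ∃ g : XX, 0 < μ {f : XX | ∃! x : II, f x - g x = 0} :=
  ⟨gl (theSetup μ), mu_pos (theSetup μ)⟩

end Build2

end SZ

end

noncomputable section

/-- For every Borel probability measure `μ` on `C[0,1]` there is a `g ∈ C[0,1]` with
`μ({ f : Z(f - g) is a singleton }) > 0`; consequently the set of `f ∈ C[0,1]` whose zero set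
is a singleton is non-shy in `C[0,1]`. -/
theorem singleton_zero_set_nonshy :
    (∀ μ : @Measure C(Set.Icc (0:ℝ) 1, ℝ) (borel C(Set.Icc (0:ℝ) 1, ℝ)),
      @IsProbabilityMeasure C(Set.Icc (0:ℝ) 1, ℝ) (borel C(Set.Icc (0:ℝ) 1, ℝ)) μ →
      ∃ g : C(Set.Icc (0:ℝ) 1, ℝ),
        0 < μ {f : C(Set.Icc (0:ℝ) 1, ℝ) | ∃! x : Set.Icc (0:ℝ) 1, f x - g x = 0}) ∧
    ¬ IsShy {f : C(Set.Icc (0:ℝ) 1, ℝ) | ∃! x : Set.Icc (0:ℝ) 1, f x = 0} := by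
  have hpart1 : ∀ μ : @Measure C(Set.Icc (0:ℝ) 1, ℝ) (borel C(Set.Icc (0:ℝ) 1, ℝ)),
      @IsProbabilityMeasure C(Set.Icc (0:ℝ) 1, ℝ) (borel C(Set.Icc (0:ℝ) 1, ℝ)) μ →
      ∃ g : C(Set.Icc (0:ℝ) 1, ℝ),
        0 < μ {f : C(Set.Icc (0:ℝ) 1, ℝ) | ∃! x : Set.Icc (0:ℝ) 1, f x - g x = 0} := by
    intro μ hμ
    haveI := hμ
    exact SZ.part1 μ
  refine ⟨hpart1, ?_⟩
  rintro ⟨B, hSB, hBmeas, ν, hν, htrans⟩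
  obtain ⟨g, hg⟩ := hpart1 ν hν
  have hsub : {f : C(Set.Icc (0:ℝ) 1, ℝ) | ∃! x : Set.Icc (0:ℝ) 1, f x - g x = 0}
      ⊆ (fun h => h + g) '' B := by
    intro f hf
    refine ⟨f - g, hSB ?_, by simp⟩
    obtain ⟨x, hx1, hx2⟩ := hf
    exact ⟨x, by simpa using hx1, fun y hy => hx2 y (by simpa using hy)⟩
  have hle := le_trans (measure_mono hsub) (le_of_eq (htrans g))
  exact absurd (lt_of_lt_of_le hg hle) (lt_irrefl _)

end
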